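/- arXiv:math/0407204 — 3 statements merged into one kernel-verified Lean document; each statement's English description precedes it below -/
import Mathlib

section
/- Let R₁, R₂ be commutative rings each equipped with a power structure defined via a family a ↦ (1-t)^{-a} as above, and let φ : R₁ → R₂ be a ring homomorphism satisfying (1-t)^{-φ(a)} = φ((1-t)^{-a}) (applying φ coefficientwise). Then φ(A(t)^m) = (φ(A(t)))^{φ(m)} for all A(t) ∈ 1 + t·R₁[[t]] and m ∈ R₁. -/
/-- Substitution `t ↦ t^k` in a formal power series. -/
noncomputable def substPow {R : Type*} [CommRing R] (k : ℕ) (A : PowerSeries R) :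
    PowerSeries R :=
  PowerSeries.mk fun n => if k ∣ n then PowerSeries.coeff (n / k) A else 0

/-- The infinite product `∏_{i ≥ 1} f i`, well defined (coefficientwise) whenever
`f i ≡ 1 mod t^i`. -/
noncomputable def infProd {R : Type*} [CommRing R] (f : ℕ → PowerSeries R) : PowerSeries R :=
  PowerSeries.mk fun n => PowerSeries.coeff n (∏ i ∈ Finset.Icc 1 n, f i)

/-- The power structure: given the family `E a = (1-t)^{-a}` and the exponents `a i` of the
unique decomposition `A(t) = ∏_{i≥1} (1-t^i)^{-a_i}`, the series
`A(t)^m := ∏_{i≥1} (1-t^i)^{-a_i m}`. -/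
noncomputable def psPow {R : Type*} [CommRing R] (E : R → PowerSeries R) (a : ℕ → R)
    (m : R) : PowerSeries R :=
  infProd fun i => substPow i (E (a i * m))

lemma map_substPow {R S : Type*} [CommRing R] [CommRing S] (φ : R →+* S) (k : ℕ)
    (A : PowerSeries R) :
    PowerSeries.map φ (substPow k A) = substPow k (PowerSeries.map φ A) := by
  ext n
  simp [substPow, PowerSeries.coeff_mk, apply_ite φ]

lemma map_infProd {R S : Type*} [CommRing R] [CommRing S] (φ : R →+* S) (f : ℕ → PowerSeries R) :
    PowerSeries.map φ (infProd f) = infProd fun i => PowerSeries.map φ (f i) := by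
  ext n
  simp only [infProd, PowerSeries.coeff_mk, PowerSeries.coeff_map, ← map_prod]

/-- If `φ : R₁ → R₂` is a ring homomorphism compatible with the families
`a ↦ (1-t)^{-a}` (i.e. `(1-t)^{-φ(a)} = φ((1-t)^{-a})` coefficientwise), then
`φ(A(t)^m) = (φ A(t))^{φ(m)}`: the image `φ(A)` has decomposition exponents `φ(a_i)`,
and applying `φ` commutes with taking powers. -/
theorem stmt6 {R₁ R₂ : Type*} [CommRing R₁] [CommRing R₂]
    (E₁ : R₁ → PowerSeries R₁) (E₂ : R₂ → PowerSeries R₂)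
    (hE₁0 : ∀ a, PowerSeries.constantCoeff (E₁ a) = 1)
    (hE₁add : ∀ a b, E₁ (a + b) = E₁ a * E₁ b)
    (hE₁1 : ∀ a, PowerSeries.coeff 1 (E₁ a) = a)
    (hE₂0 : ∀ a, PowerSeries.constantCoeff (E₂ a) = 1)
    (hE₂add : ∀ a b, E₂ (a + b) = E₂ a * E₂ b)
    (hE₂1 : ∀ a, PowerSeries.coeff 1 (E₂ a) = a)
    (φ : R₁ →+* R₂)
    (hφ : ∀ a, E₂ (φ a) = PowerSeries.map φ (E₁ a))
    (A : PowerSeries R₁) (a : ℕ → R₁)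
    (hA : A = infProd fun i => substPow i (E₁ (a i))) :
    (PowerSeries.map φ A = infProd fun i => substPow i (E₂ (φ (a i)))) ∧
    ∀ m : R₁, PowerSeries.map φ (psPow E₁ a m) = psPow E₂ (fun i => φ (a i)) (φ m) := by
  constructor
  · rw [hA, map_infProd]
    exact congrArg infProd (funext fun i => by rw [map_substPow, ← hφ])
  · intro m
    unfold psPow
    rw [map_infProd]
    exact congrArg infProd (funext fun i => by rw [map_substPow, ← hφ, map_mul])
end

section
/- Define Exp : t·R[[t]] → 1 + t·R[[t]] by Exp(∑_{k≥1} P_k t^k) := ∏_{k≥1} (1-t^k)^{-P_k}, where the power structure on R is defined via a family a ↦ (1-t)^{-a}. Then Exp is a bijection, and it transforms addition into multiplication: Exp(f + g) = Exp(f)·Exp(g). -/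
/-- `Exp(∑_{k≥1} P_k t^k) := ∏_{k≥1} (1-t^k)^{-P_k}`, defined from the family
`a ↦ (1-t)^{-a} = E a`. -/
noncomputable def ExpMap {R : Type*} [CommRing R] (E : R → PowerSeries R)
    (f : PowerSeries R) : PowerSeries R :=
  infProd fun k => substPow k (E (PowerSeries.coeff k f))

namespace StmtAux
variable {R : Type*} [CommRing R]

lemma coeff_substPow (k n : ℕ) (A : PowerSeries R) :
    PowerSeries.coeff n (substPow k A) =
      if k ∣ n then PowerSeries.coeff (n / k) A else 0 := by
  simp [substPow]

lemma substPow_mul {R : Type*} [CommRing R] {k : ℕ} (hk : 0 < k) (A B : PowerSeries R) :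
    substPow k (A * B) = substPow k A * substPow k B := by
  ext n
  rw [PowerSeries.coeff_mul, coeff_substPow]
  by_cases h : k ∣ n
  · obtain ⟨m, rfl⟩ := h
    rw [if_pos ⟨m, rfl⟩, Nat.mul_div_cancel_left m hk, PowerSeries.coeff_mul]
    symm
    have hsub : (Finset.HasAntidiagonal.antidiagonal m).image (fun p : ℕ × ℕ => (k * p.1, k * p.2)) ⊆
        Finset.HasAntidiagonal.antidiagonal (k * m) := by
      intro p hp
      simp only [Finset.mem_image] at hp
      obtain ⟨q, hq, rfl⟩ := hp
      have hq' := Finset.HasAntidiagonal.mem_antidiagonal.mp hq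
      rw [Finset.HasAntidiagonal.mem_antidiagonal]
      simp only
      rw [← Nat.mul_add, hq']
    rw [← Finset.sum_subset hsub (by
      intro p hp hnp
      rw [coeff_substPow, coeff_substPow]
      by_cases h1 : k ∣ p.1
      · by_cases h2 : k ∣ p.2
        · exfalso
          apply hnp
          obtain ⟨a, ha⟩ := h1
          obtain ⟨b, hb⟩ := h2
          have hm := Finset.HasAntidiagonal.mem_antidiagonal.mp hp
          simp only [Finset.mem_image]
          refine ⟨(a, b), Finset.HasAntidiagonal.mem_antidiagonal.mpr ?_, ?_⟩
          · have hkab : k * (a + b) = k * m := by rw [Nat.mul_add, ← ha, ← hb]; exact hm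
            exact Nat.eq_of_mul_eq_mul_left hk hkab
          · simp only [Prod.ext_iff]
            exact ⟨ha.symm, hb.symm⟩
        · rw [if_neg h2]; ring
      · rw [if_neg h1]; ring)]
    rw [Finset.sum_image (by
      intro p _ q _ hpq
      simp only [Prod.mk.injEq] at hpq
      exact Prod.ext (Nat.eq_of_mul_eq_mul_left hk hpq.1)
        (Nat.eq_of_mul_eq_mul_left hk hpq.2))]
    apply Finset.sum_congr rfl
    intro p _
    rw [coeff_substPow, coeff_substPow, if_pos ⟨p.1, rfl⟩, if_pos ⟨p.2, rfl⟩,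
      Nat.mul_div_cancel_left _ hk, Nat.mul_div_cancel_left _ hk]
  · rw [if_neg h]
    symm
    apply Finset.sum_eq_zero
    intro p hp
    have hpq := Finset.HasAntidiagonal.mem_antidiagonal.mp hp
    rw [coeff_substPow, coeff_substPow]
    by_cases h1 : k ∣ p.1
    · by_cases h2 : k ∣ p.2
      · exact absurd (hpq ▸ Nat.dvd_add h1 h2) h
      · rw [if_neg h2]; ring
    · rw [if_neg h1]; ring

/-- `P` agrees with `1` in all coefficients `≤ n`. -/
def IsOneBelow (n : ℕ) (P : PowerSeries R) : Prop :=
  ∀ j ≤ n, PowerSeries.coeff j P = if j = 0 then 1 else 0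

lemma isOneBelow_one (n : ℕ) : IsOneBelow n (1 : PowerSeries R) := by
  intro j _; simp [PowerSeries.coeff_one]

lemma isOneBelow_mul {n : ℕ} {P Q : PowerSeries R}
    (hP : IsOneBelow n P) (hQ : IsOneBelow n Q) : IsOneBelow n (P * Q) := by
  intro j hj
  rw [PowerSeries.coeff_mul]
  rcases Nat.eq_zero_or_pos j with rfl | hjpos
  · simp [hP 0 (by omega), hQ 0 (by omega)]
  · rw [if_neg hjpos.ne']
    apply Finset.sum_eq_zero
    intro p hp
    have hpq := Finset.HasAntidiagonal.mem_antidiagonal.mp hp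
    rw [hP p.1 (by omega), hQ p.2 (by omega)]
    rcases Nat.eq_zero_or_pos p.1 with h1 | h1
    · rw [if_neg (show ¬ p.2 = 0 by omega)]; ring
    · rw [if_neg (show ¬ p.1 = 0 by omega)]; ring

lemma coeff_mul_isOneBelow {n : ℕ} {P Q : PowerSeries R} (hQ : IsOneBelow n Q) :
    PowerSeries.coeff n (P * Q) = PowerSeries.coeff n P := by
  rw [PowerSeries.coeff_mul]
  rw [Finset.sum_eq_single_of_mem (n, 0) (by simp)]
  · rw [hQ 0 (by omega)]; simp
  · intro p hp hne
    have hpq := Finset.HasAntidiagonal.mem_antidiagonal.mp hp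
    rw [hQ p.2 (by omega)]
    rcases Nat.eq_zero_or_pos p.2 with h2 | h2
    · exfalso; apply hne; obtain ⟨a, b⟩ := p; simp_all
    · rw [if_neg (by omega)]; ring

lemma isOneBelow_prod {n : ℕ} {ι : Type*} (s : Finset ι) (g : ι → PowerSeries R)
    (h : ∀ i ∈ s, IsOneBelow n (g i)) : IsOneBelow n (∏ i ∈ s, g i) :=
  Finset.prod_induction g (IsOneBelow n) (fun _ _ ha hb => isOneBelow_mul ha hb)
    (isOneBelow_one n) h

lemma isOneBelow_substPow {A : PowerSeries R} (h0 : PowerSeries.constantCoeff A = 1)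
    {n i : ℕ} (hni : n < i) : IsOneBelow n (substPow i A) := by
  intro j hj
  rw [coeff_substPow]
  rcases Nat.eq_zero_or_pos j with rfl | hjpos
  · simp [PowerSeries.coeff_zero_eq_constantCoeff_apply, h0]
  · rw [if_neg hjpos.ne', if_neg]
    intro hd
    exact absurd (Nat.le_of_dvd hjpos hd) (by omega)

/-- Coefficient `j` of the product over `Icc 1 n` is stable for `n ≥ j`. -/
lemma coeff_prod_Icc_stable (u : ℕ → PowerSeries R)
    (h : ∀ i, ∀ j < i, PowerSeries.coeff j (u i) = if j = 0 then 1 else 0)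
    {j n : ℕ} (hjn : j ≤ n) :
    PowerSeries.coeff j (∏ i ∈ Finset.Icc 1 n, u i) =
      PowerSeries.coeff j (∏ i ∈ Finset.Icc 1 j, u i) := by
  have hsplit : Finset.Icc 1 n = Finset.Icc 1 j ∪ Finset.Ioc j n := by
    ext x; simp only [Finset.mem_Icc, Finset.mem_union, Finset.mem_Ioc]; omega
  have hdisj : Disjoint (Finset.Icc 1 j) (Finset.Ioc j n) := by
    rw [Finset.disjoint_left]
    intro x hx hx'
    simp only [Finset.mem_Icc] at hx
    simp only [Finset.mem_Ioc] at hx'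
    omega
  rw [hsplit, Finset.prod_union hdisj]
  exact coeff_mul_isOneBelow (isOneBelow_prod _ _ (fun i hi => by
    intro m hm
    have := Finset.mem_Ioc.mp hi
    exact h i m (by omega)))

lemma coeff_infProd_eq (u : ℕ → PowerSeries R)
    (h : ∀ i, ∀ j < i, PowerSeries.coeff j (u i) = if j = 0 then 1 else 0)
    {j n : ℕ} (hjn : j ≤ n) :
    PowerSeries.coeff j (infProd u) =
      PowerSeries.coeff j (∏ i ∈ Finset.Icc 1 n, u i) := by
  rw [infProd, PowerSeries.coeff_mk, coeff_prod_Icc_stable u h hjn,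
    coeff_prod_Icc_stable u h (le_refl j)]

/-- Coefficient of a product when only the extreme coefficients of `g` matter. -/
lemma coeff_mul_edge {n : ℕ} (hn : 0 < n) (P g : PowerSeries R)
    (hg : ∀ j, 0 < j → j < n → PowerSeries.coeff j g = 0) :
    PowerSeries.coeff n (P * g) =
      PowerSeries.coeff n P * PowerSeries.coeff 0 g
        + PowerSeries.coeff 0 P * PowerSeries.coeff n g := by
  rw [PowerSeries.coeff_mul]
  have hsub : ({(n, 0), (0, n)} : Finset (ℕ × ℕ)) ⊆ Finset.HasAntidiagonal.antidiagonal n := by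
    intro p hp
    simp only [Finset.mem_insert, Finset.mem_singleton] at hp
    rcases hp with rfl | rfl <;> simp [Finset.HasAntidiagonal.mem_antidiagonal]
  rw [← Finset.sum_subset hsub (by
    intro p hp hnp
    have hpq := Finset.HasAntidiagonal.mem_antidiagonal.mp hp
    simp only [Finset.mem_insert, Finset.mem_singleton] at hnp
    push_neg at hnp
    have h2 : 0 < p.2 ∧ p.2 < n := by
      obtain ⟨a, b⟩ := p
      obtain ⟨hn1, hn2⟩ := hnp
      rw [ne_eq, Prod.mk.injEq, not_and] at hn1 hn2
      omega
    rw [hg p.2 h2.1 h2.2]; ring)]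
  rw [Finset.sum_pair (by intro hq; rw [Prod.mk.injEq] at hq; omega)]

/-- The key recursion: coefficient `n` of the partial product up to `n`. -/
lemma coeff_step (E : R → PowerSeries R)
    (hE0 : ∀ a, PowerSeries.constantCoeff (E a) = 1)
    (hE1 : ∀ a, PowerSeries.coeff 1 (E a) = a)
    (c : ℕ → R) {n : ℕ} (hn : 0 < n) :
    PowerSeries.coeff n (∏ i ∈ Finset.Icc 1 n, substPow i (E (c i))) =
      PowerSeries.coeff n (∏ i ∈ Finset.Icc 1 (n - 1), substPow i (E (c i))) + c n := by
  have hins : Finset.Icc 1 n = insert n (Finset.Icc 1 (n - 1)) := by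
    ext x; simp only [Finset.mem_Icc, Finset.mem_insert]; omega
  have hnotmem : n ∉ Finset.Icc 1 (n - 1) := by
    simp only [Finset.mem_Icc]; omega
  rw [hins, Finset.prod_insert hnotmem, mul_comm]
  rw [coeff_mul_edge hn _ _ (by
    intro j hj hjn
    rw [coeff_substPow, if_neg]
    intro hd
    exact absurd (Nat.le_of_dvd hj hd) (by omega))]
  have hc0 : PowerSeries.coeff 0 (substPow n (E (c n))) = 1 := by
    rw [coeff_substPow, if_pos (dvd_zero n), Nat.zero_div,
      PowerSeries.coeff_zero_eq_constantCoeff_apply, hE0]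
  have hcn : PowerSeries.coeff n (substPow n (E (c n))) = c n := by
    rw [coeff_substPow, if_pos dvd_rfl, Nat.div_self hn, hE1]
  have hP0 : PowerSeries.coeff 0 (∏ i ∈ Finset.Icc 1 (n - 1), substPow i (E (c i))) = 1 := by
    rw [PowerSeries.coeff_zero_eq_constantCoeff_apply, map_prod]
    apply Finset.prod_eq_one
    intro i _
    rw [← PowerSeries.coeff_zero_eq_constantCoeff_apply, coeff_substPow,
      if_pos (dvd_zero i), Nat.zero_div, PowerSeries.coeff_zero_eq_constantCoeff_apply, hE0]
  rw [hc0, hcn, hP0, mul_one, one_mul]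

lemma expFactor_isOne (E : R → PowerSeries R)
    (hE0 : ∀ a, PowerSeries.constantCoeff (E a) = 1) (c : ℕ → R) :
    ∀ i, ∀ j < i, PowerSeries.coeff j (substPow i (E (c i))) = if j = 0 then 1 else 0 :=
  fun i j hj => isOneBelow_substPow (hE0 _) hj j (le_refl j)

/-- The coefficients of the preimage of `B`, defined by strong recursion. -/
noncomputable def solveCoeff (E : R → PowerSeries R) (B : PowerSeries R) : ℕ → R
  | 0 => 0
  | (n + 1) => PowerSeries.coeff (n + 1) B -
      PowerSeries.coeff (n + 1) (∏ i ∈ (Finset.Icc 1 n).attach,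
        substPow i.1 (E (solveCoeff E B i.1)))
decreasing_by exact Nat.lt_succ_of_le (Finset.mem_Icc.mp i.2).2

end StmtAux

open StmtAux in
/-- `Exp` is a bijection from `t·R⟦t⟧` (series with constant term `0`) onto `1 + t·R⟦t⟧`
(series with constant term `1`), transforming addition into multiplication. -/
theorem stmt8 {R : Type*} [CommRing R] (E : R → PowerSeries R)
    (hE0 : ∀ a, PowerSeries.constantCoeff (E a) = 1)
    (hEadd : ∀ a b, E (a + b) = E a * E b)
    (hE1 : ∀ a, PowerSeries.coeff 1 (E a) = a)
    (hEone : E 1 = PowerSeries.mk fun _ => (1 : R)) :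
    (∀ f g : PowerSeries R, PowerSeries.constantCoeff f = 0 →
      PowerSeries.constantCoeff g = 0 →
      ExpMap E (f + g) = ExpMap E f * ExpMap E g) ∧
    (∀ f : PowerSeries R, PowerSeries.constantCoeff f = 0 →
      PowerSeries.constantCoeff (ExpMap E f) = 1) ∧
    (∀ f g : PowerSeries R, PowerSeries.constantCoeff f = 0 →
      PowerSeries.constantCoeff g = 0 → ExpMap E f = ExpMap E g → f = g) ∧
    (∀ B : PowerSeries R, PowerSeries.constantCoeff B = 1 →
      ∃ f : PowerSeries R, PowerSeries.constantCoeff f = 0 ∧ ExpMap E f = B) := by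
  have hconst : ∀ f : PowerSeries R, PowerSeries.constantCoeff (ExpMap E f) = 1 := by
    intro f
    rw [← PowerSeries.coeff_zero_eq_constantCoeff_apply, ExpMap, infProd,
      PowerSeries.coeff_mk]
    simp
  have hcoeff : ∀ (f : PowerSeries R) (n : ℕ),
      PowerSeries.coeff n (ExpMap E f) =
        PowerSeries.coeff n (∏ i ∈ Finset.Icc 1 n,
          substPow i (E (PowerSeries.coeff i f))) := by
    intro f n
    rw [ExpMap, infProd, PowerSeries.coeff_mk]
  refine ⟨?_, fun f _ => hconst f, ?_, ?_⟩
  · -- additivity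
    intro f g _ _
    ext n
    have hu := expFactor_isOne E hE0 (fun i => PowerSeries.coeff i f)
    have hv := expFactor_isOne E hE0 (fun i => PowerSeries.coeff i g)
    rw [hcoeff, PowerSeries.coeff_mul]
    have : ∀ p ∈ Finset.HasAntidiagonal.antidiagonal n,
        PowerSeries.coeff p.1 (ExpMap E f) * PowerSeries.coeff p.2 (ExpMap E g) =
        PowerSeries.coeff p.1 (∏ i ∈ Finset.Icc 1 n,
            substPow i (E (PowerSeries.coeff i f))) *
          PowerSeries.coeff p.2 (∏ i ∈ Finset.Icc 1 n,
            substPow i (E (PowerSeries.coeff i g))) := by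
      intro p hp
      have hpq := Finset.HasAntidiagonal.mem_antidiagonal.mp hp
      rw [ExpMap, ExpMap, coeff_infProd_eq _ hu (by omega : p.1 ≤ n),
        coeff_infProd_eq _ hv (by omega : p.2 ≤ n)]
    rw [Finset.sum_congr rfl this, ← PowerSeries.coeff_mul, ← Finset.prod_mul_distrib]
    apply congrArg
    apply Finset.prod_congr rfl
    intro i hi
    have hi1 : 0 < i := (Finset.mem_Icc.mp hi).1
    rw [map_add, hEadd, substPow_mul hi1]
  · -- injectivity
    intro f g hf hg hfg
    ext n
    induction n using Nat.strong_induction_on with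
    | _ n ih =>
      rcases Nat.eq_zero_or_pos n with rfl | hn
      · rw [PowerSeries.coeff_zero_eq_constantCoeff_apply,
          PowerSeries.coeff_zero_eq_constantCoeff_apply, hf, hg]
      · have h1 := hcoeff f n
        have h2 := hcoeff g n
        have heq : PowerSeries.coeff n (ExpMap E f) = PowerSeries.coeff n (ExpMap E g) := by
          rw [hfg]
        rw [h1, h2, coeff_step E hE0 hE1 _ hn, coeff_step E hE0 hE1 _ hn] at heq
        have hprod : (∏ i ∈ Finset.Icc 1 (n - 1), substPow i (E (PowerSeries.coeff i f))) =
            ∏ i ∈ Finset.Icc 1 (n - 1), substPow i (E (PowerSeries.coeff i g)) := by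
          apply Finset.prod_congr rfl
          intro i hi
          have := Finset.mem_Icc.mp hi
          rw [ih i (by omega)]
        rw [hprod] at heq
        exact add_left_cancel heq
  · -- surjectivity
    intro B hB
    refine ⟨PowerSeries.mk (solveCoeff E B), ?_, ?_⟩
    · rw [← PowerSeries.coeff_zero_eq_constantCoeff_apply, PowerSeries.coeff_mk, solveCoeff]
    · ext n
      rcases Nat.eq_zero_or_pos n with rfl | hn
      · rw [PowerSeries.coeff_zero_eq_constantCoeff_apply, hconst,
          PowerSeries.coeff_zero_eq_constantCoeff_apply, hB]
      · obtain ⟨m, rfl⟩ : ∃ m, n = m + 1 := ⟨n - 1, by omega⟩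
        rw [hcoeff, coeff_step E hE0 hE1 _ hn]
        have hattach : (∏ i ∈ (Finset.Icc 1 m).attach, substPow i.1 (E (solveCoeff E B i.1))) =
            ∏ i ∈ Finset.Icc 1 m, substPow i (E (solveCoeff E B i)) :=
          Finset.prod_attach (Finset.Icc 1 m) (fun i => substPow i (E (solveCoeff E B i)))
        have hc : PowerSeries.coeff (m + 1) (PowerSeries.mk (solveCoeff E B)) =
            solveCoeff E B (m + 1) := PowerSeries.coeff_mk _ _
        rw [hc]
        have hform : solveCoeff E B (m + 1) = PowerSeries.coeff (m + 1) B -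
            PowerSeries.coeff (m + 1)
              (∏ i ∈ Finset.Icc 1 m, substPow i (E (solveCoeff E B i))) := by
          rw [solveCoeff, hattach]
        have hprodeq : (∏ i ∈ Finset.Icc 1 (m + 1 - 1),
              substPow i (E (PowerSeries.coeff i (PowerSeries.mk (solveCoeff E B))))) =
            ∏ i ∈ Finset.Icc 1 m, substPow i (E (solveCoeff E B i)) := by
          apply Finset.prod_congr (by norm_num)
          intro i _
          rw [PowerSeries.coeff_mk]
        rw [hprodeq, hform]
        ring
end

section
/- For power series over ℤ with constant term 1, the unique exponents in the decomposition of the partition generating function are all 1: ∏_{k≥1} (1-t^k)^{-1} is its own decomposition, and hence for any m ∈ ℤ, applying the power structure over ℤ gives (1 + ∑_{n≥1} p(n)tⁿ)^m = ∏_{k≥1}(1-t^k)^{-m}, which for m = -1 yields Euler's pentagonal-type identity (1 + ∑ p(n)tⁿ)^{-1} = ∏_{k≥1}(1-t^k). -/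
/-- `B^n` for an integer `n`, negative exponents via the inverse of `B`. -/
noncomputable def zp {R : Type*} [CommRing R] (B : PowerSeries R) (n : ℤ) : PowerSeries R :=
  B ^ n.toNat * (PowerSeries.invOfUnit B 1) ^ (-n).toNat

/-- The geometric series `(1-t)^{-1} = 1 + t + t² + ⋯` over `ℤ`. -/
noncomputable def geomZ : PowerSeries ℤ := PowerSeries.mk fun _ => (1 : ℤ)

/-- The partition generating function `1 + ∑_{n≥1} p(n) tⁿ`. -/
noncomputable def partGen : PowerSeries ℤ :=
  PowerSeries.mk fun n => (Fintype.card (Nat.Partition n) : ℤ)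

open PowerSeries Finset

namespace Stmt15Aux

variable {R : Type*} [CommRing R]

lemma coeff_substPow (k n : ℕ) (A : PowerSeries R) :
    coeff n (substPow k A) = if k ∣ n then coeff (n / k) A else 0 := coeff_mk _ _

lemma substPow_zero_eq (A : PowerSeries R) : substPow 0 A = C (constantCoeff A) := by
  ext n
  rw [coeff_substPow, coeff_C]
  simp [Nat.zero_dvd, coeff_zero_eq_constantCoeff]

lemma substPow_mul (k : ℕ) (A B : PowerSeries R) :
    substPow k (A * B) = substPow k A * substPow k B := by
  rcases Nat.eq_zero_or_pos k with rfl | hk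
  · simp [substPow_zero_eq, map_mul]
  ext n
  rw [PowerSeries.coeff_mul]
  simp only [coeff_substPow]
  simp_rw [ite_zero_mul_ite_zero]
  rw [← Finset.sum_filter]
  by_cases hdvd : k ∣ n
  · obtain ⟨m, rfl⟩ := hdvd
    rw [if_pos (Dvd.intro m rfl), Nat.mul_div_cancel_left m hk, PowerSeries.coeff_mul]
    have hemb : Function.Injective (fun p : ℕ × ℕ => (k * p.1, k * p.2)) := by
      intro p q h
      simp only [Prod.mk.injEq] at h
      exact Prod.ext (Nat.eq_of_mul_eq_mul_left hk h.1) (Nat.eq_of_mul_eq_mul_left hk h.2)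
    have hset : {p ∈ antidiagonal (k * m) | k ∣ p.1 ∧ k ∣ p.2} =
        (antidiagonal m).map ⟨_, hemb⟩ := by
      ext ⟨a, b⟩
      simp only [mem_filter, HasAntidiagonal.mem_antidiagonal, mem_map, Function.Embedding.coeFn_mk,
        Prod.mk.injEq, Prod.exists]
      constructor
      · rintro ⟨hab, ⟨c, rfl⟩, ⟨d, rfl⟩⟩
        refine ⟨c, d, ?_, rfl, rfl⟩
        have : k * (c + d) = k * m := by rw [mul_add]; exact hab
        exact Nat.eq_of_mul_eq_mul_left hk this
      · rintro ⟨c, d, h, rfl, rfl⟩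
        exact ⟨by rw [← mul_add, h], ⟨c, rfl⟩, ⟨d, rfl⟩⟩
    rw [hset, Finset.sum_map]
    simp [Nat.mul_div_cancel_left _ hk]
  · rw [if_neg hdvd]
    symm
    apply Finset.sum_eq_zero
    rintro ⟨a, b⟩ hab
    simp only [mem_filter, HasAntidiagonal.mem_antidiagonal] at hab
    exact absurd (hab.1 ▸ dvd_add hab.2.1 hab.2.2) hdvd

lemma substPow_one (k : ℕ) : substPow (R := R) k 1 = 1 := by
  ext n
  rw [coeff_substPow]
  simp only [coeff_one]
  by_cases hn : n = 0
  · subst hn; simp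
  · rw [if_neg hn]
    by_cases hd : k ∣ n
    · rw [if_pos hd, if_neg]
      intro h
      apply hn
      have := Nat.div_mul_cancel hd
      rw [h, zero_mul] at this
      exact this.symm
    · rw [if_neg hd]

/-- `g ≡ 1` modulo `X^i` (plus constant coefficient `1`). -/
def OneMod (i : ℕ) (g : PowerSeries R) : Prop :=
  constantCoeff g = 1 ∧ ∀ j, 0 < j → j < i → coeff j g = 0

lemma oneMod_substPow (i : ℕ) {A : PowerSeries R} (hA : constantCoeff A = 1) :
    OneMod i (substPow i A) := by
  constructor
  · rw [← coeff_zero_eq_constantCoeff, coeff_substPow, if_pos (dvd_zero i)]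
    simpa [coeff_zero_eq_constantCoeff] using hA
  · intro j hj hji
    rw [coeff_substPow, if_neg]
    exact fun hd => absurd (Nat.le_of_dvd hj hd) (not_le.mpr hji)

lemma coeff_prod_Icc (f : ℕ → PowerSeries R) (hf : ∀ i, OneMod i (f i)) (n : ℕ) :
    ∀ N, n ≤ N → coeff n (∏ i ∈ Icc 1 N, f i) = coeff n (∏ i ∈ Icc 1 n, f i) := by
  intro N
  induction N with
  | zero => intro h; interval_cases n; rfl
  | succ N ih =>
    intro h
    rcases Nat.lt_or_ge n (N + 1) with h' | h'
    · have hn : n ≤ N := Nat.lt_succ_iff.mp h'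
      rw [← ih hn]
      rw [show Icc 1 (N + 1) = insert (N + 1) (Icc 1 N) by
        ext x; simp only [Finset.mem_Icc, Finset.mem_insert]; omega]
      rw [Finset.prod_insert (by simp)]
      rw [PowerSeries.coeff_mul]
      rw [Finset.sum_eq_single (0, n)]
      · simp [coeff_zero_eq_constantCoeff, (hf (N + 1)).1]
      · rintro ⟨a, b⟩ hab hne
        have hs : a + b = n := mem_antidiagonal.mp hab
        have ha : 0 < a := by
          rcases Nat.eq_zero_or_pos a with rfl | hpos
          · exact absurd (by simpa using hs) (by simpa [Prod.ext_iff] using hne)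
          · exact hpos
        rw [(hf (N + 1)).2 a ha (by omega), zero_mul]
      · intro habs
        exact absurd (HasAntidiagonal.mem_antidiagonal.mpr (by simp)) habs
    · have : n = N + 1 := le_antisymm h h'
      subst this; rfl

lemma coeff_infProd (f : ℕ → PowerSeries R) (hf : ∀ i, OneMod i (f i)) {n N : ℕ} (h : n ≤ N) :
    coeff n (infProd f) = coeff n (∏ i ∈ Icc 1 N, f i) := by
  rw [infProd, coeff_mk, coeff_prod_Icc f hf n N h]

lemma infProd_mul (f g : ℕ → PowerSeries R) (hf : ∀ i, OneMod i (f i))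
    (hg : ∀ i, OneMod i (g i)) :
    infProd f * infProd g = infProd fun i => f i * g i := by
  ext n
  rw [PowerSeries.coeff_mul]
  have hcong : ∀ p ∈ antidiagonal n, coeff p.1 (infProd f) * coeff p.2 (infProd g)
      = coeff p.1 (∏ i ∈ Icc 1 n, f i) * coeff p.2 (∏ i ∈ Icc 1 n, g i) := by
    rintro ⟨a, b⟩ hab
    have hs := mem_antidiagonal.mp hab
    rw [coeff_infProd f hf (show a ≤ n by omega), coeff_infProd g hg (show b ≤ n by omega)]
  rw [Finset.sum_congr rfl hcong, ← PowerSeries.coeff_mul, ← Finset.prod_mul_distrib]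
  rw [infProd, coeff_mk]

lemma infProd_one : infProd (fun _ => (1 : PowerSeries R)) = 1 := by
  ext n
  rw [infProd, coeff_mk, Finset.prod_const_one]

lemma infProd_substPow_pow (A : PowerSeries R) (hA : constantCoeff A = 1) (a : ℕ) :
    infProd (fun k => substPow k (A ^ a)) = (infProd fun k => substPow k A) ^ a := by
  induction a with
  | zero =>
    simp only [pow_zero]
    simp only [substPow_one]
    exact infProd_one
  | succ a ih =>
    have hstep : (fun k => substPow k (A ^ (a + 1))) =
        fun k => substPow k (A ^ a) * substPow k A := by
      funext k; rw [pow_succ, substPow_mul]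
    rw [hstep, ← infProd_mul _ _ (fun i => oneMod_substPow i (by simp [map_pow, hA]))
      (fun i => oneMod_substPow i hA), ih, pow_succ]

end Stmt15Aux

namespace Stmt15Aux

noncomputable section
open scoped Classical

variable {α : Type*}

/-- A convenience constructor for the power series whose coefficients indicate a subset. -/
def indicatorSeries (α : Type*) [Semiring α] (s : Set ℕ) : PowerSeries α :=
  PowerSeries.mk fun n => if n ∈ s then 1 else 0

theorem coeff_indicator (s : Set ℕ) [Semiring α] (n : ℕ) :
    coeff (R := α) n (indicatorSeries _ s) = if n ∈ s then 1 else 0 :=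
  coeff_mk _ _

-- The main workhorse of the partition theorem proof.
theorem partialGF_prop (α : Type*) [CommSemiring α] (n : ℕ) (s : Finset ℕ) (hs : ∀ i ∈ s, 0 < i)
    (c : ℕ → Set ℕ) (hc : ∀ i, i ∉ s → 0 ∈ c i) :
    #{p : n.Partition | (∀ j, p.parts.count j ∈ c j) ∧ ∀ j ∈ p.parts, j ∈ s} =
      coeff n (∏ i ∈ s, indicatorSeries α ((· * i) '' c i)) := by
  simp_rw [coeff_prod, coeff_indicator, prod_boole, sum_boole]
  apply congr_arg
  simp only [mem_univ, forall_true_left, not_and, not_forall, exists_prop,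
    Set.mem_image, not_exists]
  set φ : (a : Nat.Partition n) →
    a ∈ filter (fun p ↦ (∀ (j : ℕ), Multiset.count j p.parts ∈ c j) ∧ ∀ j ∈ p.parts, j ∈ s) univ →
    ℕ →₀ ℕ := fun p _ => {
      toFun := fun i => Multiset.count i p.parts • i
      support := Finset.filter (fun i => i ≠ 0) p.parts.toFinset
      mem_support_toFun := fun a => by
        simp only [smul_eq_mul, ne_eq, mul_eq_zero, Multiset.count_eq_zero]
        rw [not_or, not_not]
        simp only [Multiset.mem_toFinset, not_not, mem_filter] }
  refine Finset.card_bij φ ?_ ?_ ?_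
  · intro a ha
    simp only [φ, not_forall, not_exists, not_and, exists_prop, mem_filter]
    rw [mem_finsuppAntidiag]
    dsimp only [ne_eq, smul_eq_mul, id_eq, eq_mpr_eq_cast, le_eq_subset, Finsupp.coe_mk]
    simp only [mem_univ, forall_true_left, not_and, not_forall, exists_prop,
      mem_filter, true_and] at ha
    refine ⟨⟨?_, fun i ↦ ?_⟩, fun i _ ↦ ⟨a.parts.count i, ha.1 i, rfl⟩⟩
    · conv_rhs => simp [← a.parts_sum]
      rw [sum_multiset_count_of_subset _ s]
      · simp only [smul_eq_mul]
      · intro i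
        simp only [Multiset.mem_toFinset, not_not, mem_filter]
        apply ha.2
    · simp only [ne_eq, Multiset.mem_toFinset, not_not, mem_filter, and_imp]
      exact fun hi _ ↦ ha.2 i hi
  · intro p₁ hp₁ p₂ hp₂ h
    apply Nat.Partition.ext
    simp only [true_and, mem_univ, mem_filter] at hp₁ hp₂
    ext i
    simp only [φ, ne_eq, Multiset.mem_toFinset, not_not, smul_eq_mul, Finsupp.mk.injEq] at h
    by_cases hi : i = 0
    · rw [hi]
      rw [Multiset.count_eq_zero_of_notMem]
      · rw [Multiset.count_eq_zero_of_notMem]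
        intro a; exact Nat.lt_irrefl 0 (hs 0 (hp₂.2 0 a))
      intro a; exact Nat.lt_irrefl 0 (hs 0 (hp₁.2 0 a))
    · rw [← mul_left_inj' hi]
      rw [funext_iff] at h
      exact h.2 i
  · simp only [φ, mem_filter, mem_finsuppAntidiag, mem_univ, exists_prop, true_and, and_assoc]
    rintro f ⟨hf, hf₃, hf₄⟩
    have hf' : f ∈ finsuppAntidiag s n := mem_finsuppAntidiag.mpr ⟨hf, hf₃⟩
    simp only [mem_finsuppAntidiag] at hf'
    refine ⟨⟨∑ i ∈ s, Multiset.replicate (f i / i) i, ?_, ?_⟩, ?_, ?_, ?_⟩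
    · intro i hi
      simp only [exists_prop, Multiset.mem_sum, mem_map, Function.Embedding.coeFn_mk] at hi
      rcases hi with ⟨t, ht, z⟩
      apply hs
      rwa [Multiset.eq_of_mem_replicate z]
    · simp_rw [Multiset.sum_sum, Multiset.sum_replicate, Nat.nsmul_eq_mul]
      rw [← hf'.1]
      refine sum_congr rfl fun i hi => Nat.div_mul_cancel ?_
      rcases hf₄ i hi with ⟨w, _, hw₂⟩
      rw [← hw₂]
      exact dvd_mul_left _ _
    · intro i
      simp_rw [Multiset.count_sum', Multiset.count_replicate, sum_ite_eq']
      split_ifs with h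
      · rcases hf₄ i h with ⟨w, hw₁, hw₂⟩
        rwa [← hw₂, Nat.mul_div_cancel _ (hs i h)]
      · exact hc _ h
    · intro i hi
      rw [Multiset.mem_sum] at hi
      rcases hi with ⟨j, hj₁, hj₂⟩
      rwa [Multiset.eq_of_mem_replicate hj₂]
    · ext i
      simp_rw [Multiset.count_sum', Multiset.count_replicate, sum_ite_eq']
      simp only [ne_eq, Multiset.mem_toFinset, not_not, smul_eq_mul, ite_mul,
        zero_mul, Finsupp.coe_mk]
      split_ifs with h
      · apply Nat.div_mul_cancel
        rcases hf₄ i h with ⟨w, _, hw₂⟩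
        apply Dvd.intro_left _ hw₂
      · apply symm
        rw [← Finsupp.notMem_support_iff]
        exact notMem_mono hf'.2 h

end
end Stmt15Aux

namespace Stmt15Aux
open PowerSeries Finset

lemma constantCoeff_geomZ : constantCoeff geomZ = 1 := by
  rw [← coeff_zero_eq_constantCoeff, geomZ, coeff_mk]

lemma constantCoeff_one_sub_X : constantCoeff (1 - X : PowerSeries ℤ) = 1 := by
  simp

lemma substPow_geom (i : ℕ) :
    substPow i geomZ = indicatorSeries ℤ ((· * i) '' (Set.univ : Set ℕ)) := by
  ext n
  rw [coeff_substPow, coeff_indicator, geomZ, coeff_mk]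
  congr 1
  simp only [Set.image_univ, Set.mem_range, eq_iff_iff]
  constructor
  · rintro ⟨c, rfl⟩; exact ⟨c, mul_comm c i⟩
  · rintro ⟨c, rfl⟩; exact ⟨c, mul_comm c i⟩

/-- Part 1: the partition generating function. -/
lemma part1 : partGen = infProd fun k => substPow k geomZ := by
  ext n
  rw [partGen, coeff_mk, infProd, coeff_mk]
  rw [Finset.prod_congr rfl fun i (_ : i ∈ Icc 1 n) => substPow_geom i]
  rw [← partialGF_prop ℤ n (Icc 1 n) (fun i hi => (mem_Icc.mp hi).1) (fun _ => Set.univ)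
    (fun _ _ => Set.mem_univ 0)]
  congr 1
  rw [← Finset.card_univ]
  congr 1
  symm
  rw [Finset.eq_univ_iff_forall]
  intro p
  simp only [Set.mem_univ, true_and, mem_filter, Finset.mem_univ, mem_Icc]
  exact ⟨fun _ => trivial, fun j hj => ⟨p.parts_pos hj, le_trans
    (Multiset.single_le_sum (fun _ _ => Nat.zero_le _) _ hj) p.parts_sum.le⟩⟩

lemma one_sub_X_mul_geom : (1 - X : PowerSeries ℤ) * geomZ = 1 := by
  ext n
  rw [sub_mul, one_mul, map_sub]
  cases n with
  | zero => simp [geomZ, coeff_mk]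
  | succ n => rw [coeff_succ_X_mul]; simp [geomZ, coeff_mk, coeff_one]

lemma FG_one (i : ℕ) :
    substPow i (1 - X : PowerSeries ℤ) * substPow i geomZ = 1 := by
  rw [← substPow_mul, one_sub_X_mul_geom, substPow_one]

/-- Part 3: Euler's identity. -/
lemma part3 : (infProd fun k => substPow k (1 - X : PowerSeries ℤ)) * partGen = 1 := by
  rw [part1, infProd_mul _ _ (fun i => oneMod_substPow i constantCoeff_one_sub_X)
    (fun i => oneMod_substPow i constantCoeff_geomZ)]
  simp only [FG_one]
  exact infProd_one

lemma invOfUnit_geom : PowerSeries.invOfUnit geomZ 1 = 1 - X := by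
  have hmul : geomZ * PowerSeries.invOfUnit geomZ 1 = 1 :=
    PowerSeries.mul_invOfUnit geomZ 1 (by simpa using constantCoeff_geomZ)
  have h2 : geomZ * (1 - X) = 1 := by rw [mul_comm]; exact one_sub_X_mul_geom
  calc PowerSeries.invOfUnit geomZ 1
      = PowerSeries.invOfUnit geomZ 1 * (geomZ * (1 - X)) := by rw [h2, mul_one]
    _ = geomZ * PowerSeries.invOfUnit geomZ 1 * (1 - X) := by ring
    _ = 1 - X := by rw [hmul, one_mul]

end Stmt15Aux

open Stmt15Aux PowerSeries in
/-- The unique decomposition of the partition generating function has all exponents `1`: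
`1 + ∑ p(n)tⁿ = ∏_{k≥1}(1-t^k)^{-1}`; hence for any `m ∈ ℤ` the power structure over `ℤ`
(usual exponentiation of units of `ℤ⟦t⟧`) gives `(1 + ∑ p(n)tⁿ)^m = ∏_{k≥1}(1-t^k)^{-m}`,
and for `m = -1` Euler's identity `∏_{k≥1}(1-t^k) · (1 + ∑ p(n)tⁿ) = 1`. -/
theorem stmt15 :
    (partGen = infProd fun k => substPow k geomZ) ∧
    (∀ u : (PowerSeries ℤ)ˣ, (u : PowerSeries ℤ) = partGen → ∀ m : ℤ,
      ((u ^ m : (PowerSeries ℤ)ˣ) : PowerSeries ℤ) =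
        infProd fun k => substPow k (zp geomZ m)) ∧
    (infProd fun k => substPow k (1 - PowerSeries.X : PowerSeries ℤ)) * partGen = 1 := by
  refine ⟨part1, ?_, part3⟩
  intro u hu m
  rcases le_or_gt 0 m with hm | hm
  · lift m to ℕ using hm with a
    have hz : zp geomZ (a : ℤ) = geomZ ^ a := by
      simp [zp, Int.toNat_natCast]
    simp only [hz]
    rw [infProd_substPow_pow geomZ constantCoeff_geomZ a, zpow_natCast,
      Units.val_pow_eq_pow_val, hu, part1]
  · have hinv : ((u⁻¹ : (PowerSeries ℤ)ˣ) : PowerSeries ℤ) =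
        infProd fun k => substPow k (1 - X) := by
      apply Units.inv_eq_of_mul_eq_one_left
      rw [hu]; exact part3
    set b : ℕ := (-m).toNat with hb
    have hmb : m = -(b : ℤ) := by omega
    have hz : zp geomZ m = (1 - X) ^ b := by
      rw [zp, invOfUnit_geom, show m.toNat = 0 by omega, pow_zero, one_mul, ← hb]
    simp only [hz]
    rw [infProd_substPow_pow (1 - X) constantCoeff_one_sub_X b, ← hinv, hmb,
      zpow_neg, zpow_natCast, ← inv_pow, Units.val_pow_eq_pow_val]
end
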